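/- Let r be a nonzero integer and let μ : H_r → Γ_r be the injective homomorphism with μ(g₁) = ((1,0),0), μ(g₂) = ((0,1),0), μ(g₃) = ((0,0),1). Then every group homomorphism φ : H_r → H_r lifts to a unique endomorphism Φ of Γ_r, i.e., there is exactly one group homomorphism Φ : Γ_r → Γ_r with Φ ∘ μ = μ ∘ φ. -/

import Mathlib

/-- `ℤ[r/2]`: the additive subgroup of `ℚ` generated by `1` and `r/2`;
it equals `ℤ` if `r` is even and `(1/2)ℤ` if `r` is odd. -/
def Zr (r : ℤ) : AddSubgroup ℚ := AddSubgroup.closure {1, (r : ℚ) / 2}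

lemma intCast_mem_Zr (r n : ℤ) : (n : ℚ) ∈ Zr r := by
  have h1 : (1 : ℚ) ∈ Zr r := AddSubgroup.subset_closure (by simp)
  simpa using AddSubgroup.zsmul_mem _ h1 n

lemma half_mul_intCast_mem_Zr (r n : ℤ) : (r : ℚ) / 2 * (n : ℚ) ∈ Zr r := by
  have h1 : (r : ℚ) / 2 ∈ Zr r := AddSubgroup.subset_closure (by simp)
  have := AddSubgroup.zsmul_mem _ h1 n
  simpa [zsmul_eq_mul, mul_comm] using this

/-- The group `Γ_r`, with underlying set `ℤ² × ℤ[r/2]` and multiplication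
`(ζ, y)(ζ', y') = (ζ + ζ', y + y' + (r/2) det(ζ, ζ'))`. -/
@[ext]
structure GammaR (r : ℤ) where
  zeta : Fin 2 → ℤ
  y : ℚ
  hy : y ∈ Zr r

namespace GammaR

variable {r : ℤ}

instance : Mul (GammaR r) :=
  ⟨fun a b =>
    ⟨a.zeta + b.zeta,
     a.y + b.y + (r : ℚ) / 2 * ((a.zeta 0 * b.zeta 1 - a.zeta 1 * b.zeta 0 : ℤ) : ℚ),
     add_mem (add_mem a.hy b.hy) (half_mul_intCast_mem_Zr r _)⟩⟩

instance : One (GammaR r) := ⟨⟨0, 0, zero_mem _⟩⟩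

instance : Inv (GammaR r) := ⟨fun a => ⟨-a.zeta, -a.y, neg_mem a.hy⟩⟩

@[simp] lemma mul_zeta (a b : GammaR r) : (a * b).zeta = a.zeta + b.zeta := rfl
@[simp] lemma mul_y (a b : GammaR r) :
    (a * b).y = a.y + b.y + (r : ℚ) / 2 *
      ((a.zeta 0 * b.zeta 1 - a.zeta 1 * b.zeta 0 : ℤ) : ℚ) := rfl
@[simp] lemma one_zeta : (1 : GammaR r).zeta = 0 := rfl
@[simp] lemma one_y : (1 : GammaR r).y = 0 := rfl
@[simp] lemma inv_zeta (a : GammaR r) : a⁻¹.zeta = -a.zeta := rfl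
@[simp] lemma inv_y (a : GammaR r) : a⁻¹.y = -a.y := rfl

instance : Group (GammaR r) where
  mul_assoc a b c := by
    ext
    · simp [add_assoc]
    · simp only [mul_y, mul_zeta, Pi.add_apply]
      push_cast
      ring
  one_mul a := by ext <;> simp
  mul_one a := by ext <;> simp
  inv_mul_cancel a := by
    ext
    · simp
    · simp only [mul_y, inv_y, inv_zeta, Pi.neg_apply, one_y]
      push_cast
      ring

/-- The element `((l₁,l₂), l₃ + l₁l₂r/2)` of `Γ_r`. -/
def elt (r l1 l2 l3 : ℤ) : GammaR r :=
  ⟨![l1, l2], (l3 : ℚ) + (l1 : ℚ) * (l2 : ℚ) * (r : ℚ) / 2, by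
    have h1 := intCast_mem_Zr r l3
    have h2 := half_mul_intCast_mem_Zr r (l1 * l2)
    have : (l3 : ℚ) + (r : ℚ) / 2 * ((l1 * l2 : ℤ) : ℚ) ∈ Zr r := add_mem h1 h2
    convert this using 1
    push_cast
    ring⟩

end GammaR

/-- The relations of the group `H_r`: generators `g₁,g₂,g₃` (indexed by `Fin 3`) and
relations `g₁g₂g₁⁻¹g₂⁻¹ = g₃^{r}`, `g₁g₃ = g₃g₁`, `g₂g₃ = g₃g₂`. -/
def hRels (r : ℤ) : Set (FreeGroup (Fin 3)) :=
  { FreeGroup.of 0 * FreeGroup.of 1 * (FreeGroup.of 0)⁻¹ * (FreeGroup.of 1)⁻¹ *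
      ((FreeGroup.of 2) ^ r)⁻¹,
    FreeGroup.of 0 * FreeGroup.of 2 * (FreeGroup.of 0)⁻¹ * (FreeGroup.of 2)⁻¹,
    FreeGroup.of 1 * FreeGroup.of 2 * (FreeGroup.of 1)⁻¹ * (FreeGroup.of 2)⁻¹ }

/-- The group `H_r`. -/
abbrev Hr (r : ℤ) := PresentedGroup (hRels r)

namespace GammaR
variable {r : ℤ}

lemma zpow_eq (g : GammaR r) (n : ℤ) :
    g ^ n = ⟨n • g.zeta, (n : ℚ) * g.y, by
      simpa [zsmul_eq_mul] using AddSubgroup.zsmul_mem _ g.hy n⟩ := by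
  induction n using Int.induction_on with
  | zero => ext <;> simp
  | succ n ih =>
      rw [zpow_add_one, ih]
      ext
      · simp only [mul_zeta, Pi.add_apply, Pi.smul_apply, smul_eq_mul]
        push_cast; ring
      · simp only [mul_y, mul_zeta, Pi.smul_apply, smul_eq_mul]
        push_cast; ring
  | pred n ih =>
      rw [zpow_sub_one, ih]
      ext
      · simp only [mul_zeta, inv_zeta, Pi.add_apply, Pi.neg_apply, Pi.smul_apply, smul_eq_mul]
        push_cast; ring
      · simp only [mul_y, mul_zeta, inv_y, inv_zeta, Pi.neg_apply, Pi.smul_apply, smul_eq_mul]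
        push_cast; ring

lemma mul_self_injective : Function.Injective (fun g : GammaR r => g * g) := by
  intro u v h
  have hz := congrArg GammaR.zeta h
  have hy := congrArg GammaR.y h
  simp only [mul_zeta, mul_y, sub_self, Int.cast_zero, mul_zero, add_zero] at hz hy
  have hz' : u.zeta = v.zeta := by
    funext i
    have := congrFun hz i
    simp only [Pi.add_apply] at this
    omega
  ext
  · exact congrFun hz' _
  · rw [hz'] at hy; linarith

end GammaR

lemma Zr_half {r : ℤ} {y : ℚ} (h : y ∈ Zr r) : ∃ m : ℤ, y = m / 2 := by
  induction h using AddSubgroup.closure_induction with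
  | mem x hx =>
      rcases hx with hx | hx
      · exact ⟨2, by rw [hx]; norm_num⟩
      · exact ⟨r, by rw [hx]⟩
  | zero => exact ⟨0, by norm_num⟩
  | add x y _ _ hx hy =>
      obtain ⟨m, hm⟩ := hx; obtain ⟨n, hn⟩ := hy
      exact ⟨m + n, by rw [hm, hn]; push_cast; ring⟩
  | neg x _ hx =>
      obtain ⟨m, hm⟩ := hx
      exact ⟨-m, by rw [hm]; push_cast; ring⟩

lemma mu_elt {r : ℤ} (μ : Hr r →* GammaR r)
    (h1 : μ (PresentedGroup.of 0) = GammaR.elt r 1 0 0)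
    (h2 : μ (PresentedGroup.of 1) = GammaR.elt r 0 1 0)
    (h3 : μ (PresentedGroup.of 2) = GammaR.elt r 0 0 1)
    (l1 l2 l3 : ℤ) :
    μ (PresentedGroup.of 0 ^ l1 * PresentedGroup.of 1 ^ l2 * PresentedGroup.of 2 ^ l3)
      = GammaR.elt r l1 l2 l3 := by
  rw [map_mul, map_mul, map_zpow, map_zpow, map_zpow, h1, h2, h3,
    GammaR.zpow_eq, GammaR.zpow_eq, GammaR.zpow_eq]
  ext i
  · fin_cases i <;>
      simp [GammaR.elt, GammaR.mul_zeta, Pi.add_apply, Pi.smul_apply, smul_eq_mul]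
  · simp only [GammaR.mul_y, GammaR.mul_zeta, GammaR.elt, Pi.add_apply, Pi.smul_apply,
      smul_eq_mul, Matrix.cons_val_zero, Matrix.cons_val_one, Matrix.head_cons]
    push_cast; ring

/-- The candidate lift: `Φ(ζ,y) = (ζ₀•A + ζ₁•B, det(A,B)·y + ζ₀·a.y + ζ₁·b.y)`. -/
def Phi (r : ℤ) (a b : GammaR r) : GammaR r →* GammaR r where
  toFun g := ⟨g.zeta 0 • a.zeta + g.zeta 1 • b.zeta,
    ((a.zeta 0 * b.zeta 1 - a.zeta 1 * b.zeta 0 : ℤ) : ℚ) * g.y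
      + (g.zeta 0 : ℚ) * a.y + (g.zeta 1 : ℚ) * b.y,
    by
      refine add_mem (add_mem ?_ ?_) ?_
      · simpa [zsmul_eq_mul] using
          AddSubgroup.zsmul_mem _ g.hy (a.zeta 0 * b.zeta 1 - a.zeta 1 * b.zeta 0)
      · simpa [zsmul_eq_mul] using AddSubgroup.zsmul_mem _ a.hy (g.zeta 0)
      · simpa [zsmul_eq_mul] using AddSubgroup.zsmul_mem _ b.hy (g.zeta 1)⟩
  map_one' := by ext <;> simp
  map_mul' x y := by
    ext i
    · simp only [GammaR.mul_zeta, Pi.add_apply, Pi.smul_apply, smul_eq_mul]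
      ring
    · simp only [GammaR.mul_y, GammaR.mul_zeta, Pi.add_apply, Pi.smul_apply, smul_eq_mul]
      push_cast; ring

@[simp] lemma Phi_zeta {r : ℤ} (a b g : GammaR r) :
    (Phi r a b g).zeta = g.zeta 0 • a.zeta + g.zeta 1 • b.zeta := rfl

@[simp] lemma Phi_y {r : ℤ} (a b g : GammaR r) :
    (Phi r a b g).y = ((a.zeta 0 * b.zeta 1 - a.zeta 1 * b.zeta 0 : ℤ) : ℚ) * g.y
      + (g.zeta 0 : ℚ) * a.y + (g.zeta 1 : ℚ) * b.y := rfl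

/-- Let `μ : H_r → Γ_r` be the injective homomorphism with `μ(g₁) = ((1,0),0)`,
`μ(g₂) = ((0,1),0)`, `μ(g₃) = ((0,0),1)`. Every group homomorphism `φ : H_r → H_r`
lifts to a unique endomorphism `Φ` of `Γ_r`, i.e. there is exactly one group
homomorphism `Φ : Γ_r → Γ_r` with `Φ ∘ μ = μ ∘ φ`. -/
theorem stmt_7 (r : ℤ) (hr : r ≠ 0) (μ : Hr r →* GammaR r)
    (hinj : Function.Injective μ)
    (h1 : μ (PresentedGroup.of 0) = GammaR.elt r 1 0 0)
    (h2 : μ (PresentedGroup.of 1) = GammaR.elt r 0 1 0)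
    (h3 : μ (PresentedGroup.of 2) = GammaR.elt r 0 0 1) :
    ∀ φ : Hr r →* Hr r, ∃! Φ : GammaR r →* GammaR r, Φ.comp μ = μ.comp φ := by
  intro φ
  have hrQ : (r : ℚ) ≠ 0 := Int.cast_ne_zero.mpr hr
  have hrel : ∀ w ∈ hRels r, PresentedGroup.mk (hRels r) w = 1 := fun w hw =>
    (QuotientGroup.eq_one_iff w).mpr (Subgroup.subset_normalClosure hw)
  set a := μ (φ (PresentedGroup.of 0)) with ha
  set b := μ (φ (PresentedGroup.of 1)) with hb
  set c := μ (φ (PresentedGroup.of 2)) with hc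
  -- relations in Hr
  have rel1 : (PresentedGroup.of 0 : Hr r) * .of 1 * (.of 0)⁻¹ * (.of 1)⁻¹ = (.of 2) ^ r := by
    have h := hrel (FreeGroup.of 0 * FreeGroup.of 1 * (FreeGroup.of 0)⁻¹ * (FreeGroup.of 1)⁻¹ *
      ((FreeGroup.of 2) ^ r)⁻¹) (by simp [hRels])
    simp only [map_mul, map_inv, map_zpow] at h
    rw [mul_inv_eq_one] at h
    exact h
  have rel2 : (PresentedGroup.of 0 : Hr r) * .of 2 = .of 2 * .of 0 := by
    have h := hrel (FreeGroup.of 0 * FreeGroup.of 2 * (FreeGroup.of 0)⁻¹ * (FreeGroup.of 2)⁻¹)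
      (by simp [hRels])
    simp only [map_mul, map_inv] at h
    rw [mul_inv_eq_one, mul_inv_eq_iff_eq_mul] at h
    exact h
  have rel3 : (PresentedGroup.of 1 : Hr r) * .of 2 = .of 2 * .of 1 := by
    have h := hrel (FreeGroup.of 1 * FreeGroup.of 2 * (FreeGroup.of 1)⁻¹ * (FreeGroup.of 2)⁻¹)
      (by simp [hRels])
    simp only [map_mul, map_inv] at h
    rw [mul_inv_eq_one, mul_inv_eq_iff_eq_mul] at h
    exact h
  -- images of the relations
  have ca : a * b * a⁻¹ * b⁻¹ = c ^ r := by
    have := congrArg (fun x => μ (φ x)) rel1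
    simpa only [map_mul, map_inv, map_zpow] using this
  have ac : a * c = c * a := by
    have := congrArg (fun x => μ (φ x)) rel2
    simpa only [map_mul] using this
  have bc : b * c = c * b := by
    have := congrArg (fun x => μ (φ x)) rel3
    simpa only [map_mul] using this
  -- c has trivial zeta
  have hcz : c.zeta = 0 := by
    have h := congrArg GammaR.zeta ca
    rw [GammaR.zpow_eq] at h
    simp only [GammaR.mul_zeta, GammaR.inv_zeta] at h
    funext i
    have hi := congrFun h i
    simp only [Pi.add_apply, Pi.neg_apply, Pi.smul_apply, smul_eq_mul] at hi
    have : r * c.zeta i = 0 := by linarith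
    simpa using (mul_eq_zero.mp this).resolve_left hr
  have hcy : c.y = ((a.zeta 0 * b.zeta 1 - a.zeta 1 * b.zeta 0 : ℤ) : ℚ) := by
    have h := congrArg GammaR.y ca
    rw [GammaR.zpow_eq] at h
    simp only [GammaR.mul_y, GammaR.mul_zeta, GammaR.inv_y, GammaR.inv_zeta,
      Pi.add_apply, Pi.neg_apply] at h
    refine mul_left_cancel₀ hrQ ?_
    rw [← h]
    push_cast; ring
  have hcomm : (Phi r a b).comp μ = μ.comp φ := by
    refine PresentedGroup.ext fun x => ?_
    simp only [MonoidHom.comp_apply]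
    fin_cases x
    · show Phi r a b (μ (PresentedGroup.of 0)) = μ (φ (PresentedGroup.of 0))
      rw [h1, ← ha]
      ext i
      · fin_cases i <;> simp [GammaR.elt]
      · simp [GammaR.elt]
    · show Phi r a b (μ (PresentedGroup.of 1)) = μ (φ (PresentedGroup.of 1))
      rw [h2, ← hb]
      ext i
      · fin_cases i <;> simp [GammaR.elt]
      · simp [GammaR.elt]
    · show Phi r a b (μ (PresentedGroup.of 2)) = μ (φ (PresentedGroup.of 2))
      rw [h3, ← hc]
      ext i
      · fin_cases i <;> simp [GammaR.elt, hcz]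
      · simp [GammaR.elt, hcy]
  refine ⟨Phi r a b, hcomm, ?_⟩
  intro Ψ hΨ
  have hrange : ∀ x : Hr r, Ψ (μ x) = Phi r a b (μ x) := fun x => by
    have e1 : Ψ (μ x) = μ (φ x) := DFunLike.congr_fun hΨ x
    have e2 : Phi r a b (μ x) = μ (φ x) := DFunLike.congr_fun hcomm x
    rw [e1, e2]
  apply MonoidHom.ext
  intro g
  obtain ⟨m, hm⟩ := Zr_half g.hy
  have hsq : μ (PresentedGroup.of 0 ^ (2 * g.zeta 0) * PresentedGroup.of 1 ^ (2 * g.zeta 1)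
      * PresentedGroup.of 2 ^ (m - 2 * g.zeta 0 * g.zeta 1 * r)) = g * g := by
    rw [mu_elt μ h1 h2 h3]
    ext i
    · fin_cases i <;> simp [GammaR.elt] <;> ring
    · simp only [GammaR.elt, GammaR.mul_y]
      rw [hm]
      push_cast; ring
  refine GammaR.mul_self_injective ?_
  show Ψ g * Ψ g = Phi r a b g * Phi r a b g
  rw [← map_mul, ← map_mul, ← hsq, hrange]
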